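/- arXiv:2110.10315 — 4 statements merged into one kernel-verified Lean document; each statement's English description precedes it below -/
import Mathlib

section
/- Let \alpha_1, \ldots, \alpha_m be the complex zeroes of E_m(x) (with multiplicity). Then \sum_{i=1}^m \alpha_i^{-1} = -1, \sum_{i=1}^m \alpha_i^{-t} = 0 for 2 \le t \le m, \sum_{i=1}^m \alpha_i^{-(m+1)} = 1/m!, and \sum_{i=1}^m \alpha_i^{-(m+2)} = -1/m!. -/
open Polynomial

noncomputable def Epoly (m : ℕ) : Polynomial ℂ :=
  ∑ k ∈ Finset.range (m + 1), C ((k.factorial : ℂ))⁻¹ * X ^ k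

private noncomputable def Gser (a : ℂ) : PowerSeries ℂ :=
  PowerSeries.mk fun t => -(a⁻¹) ^ (t + 1)

private lemma Gser_mul (a : ℂ) (ha : a ≠ 0) :
    ((X - C a : ℂ[X]) : PowerSeries ℂ) * Gser a = 1 := by
  have : ((X - C a : ℂ[X]) : PowerSeries ℂ)
      = PowerSeries.X - PowerSeries.C a := by
    push_cast; ring
  rw [this]
  ext n
  rw [sub_mul, map_sub]
  cases n with
  | zero => simp [Gser, ha]
  | succ k =>
      rw [PowerSeries.coeff_succ_X_mul]
      simp only [Gser, PowerSeries.coeff_mk, PowerSeries.coeff_C_mul,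
        PowerSeries.coeff_one, Nat.succ_ne_zero, if_neg]
      have : a * a⁻¹ = 1 := mul_inv_cancel₀ ha
      field_simp
      rw [if_neg not_false]
      linear_combination a⁻¹ * a⁻¹ ^ k * this

private lemma prod_deriv (s : Multiset ℂ) (hs : ∀ a ∈ s, a ≠ 0) :
    ((Polynomial.derivative ((s.map fun a => X - C a).prod) : ℂ[X]) : PowerSeries ℂ)
      = ((s.map fun a => X - C a).prod : ℂ[X]) * (s.map Gser).sum := by
  induction s using Multiset.induction_on with
  | empty => simp
  | cons a t ih =>
      have ha : a ≠ 0 := hs a (Multiset.mem_cons_self a t)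
      have iht := ih (fun b hb => hs b (Multiset.mem_cons_of_mem hb))
      simp only [Multiset.map_cons, Multiset.prod_cons, Multiset.sum_cons]
      rw [derivative_mul, Polynomial.coe_add, Polynomial.coe_mul, Polynomial.coe_mul,
        Polynomial.coe_mul, iht]
      have hd : Polynomial.derivative (X - C a) = 1 := by simp
      rw [hd, Polynomial.coe_one, one_mul]
      set P : PowerSeries ℂ := (((Multiset.map (fun a => X - C a) t).prod : ℂ[X]) : PowerSeries ℂ)
      set A : PowerSeries ℂ := ((X - C a : ℂ[X]) : PowerSeries ℂ)
      have h1 : A * Gser a = 1 := Gser_mul a ha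
      have h2 : A * P * Gser a = P := by
        rw [mul_comm A P, mul_assoc, h1, mul_one]
      rw [mul_add, h2]
      ring

private lemma Epoly_coeff (m n : ℕ) :
    (Epoly m).coeff n = if n ≤ m then ((n.factorial : ℂ))⁻¹ else 0 := by
  simp [Epoly, Polynomial.finset_sum_coeff, Polynomial.coeff_C_mul, Polynomial.coeff_X_pow,
    Finset.sum_ite_eq', Finset.mem_range, Nat.lt_succ_iff, eq_comm]

private lemma fact_ne (n : ℕ) : (n.factorial : ℂ) ≠ 0 := by
  exact_mod_cast Nat.cast_ne_zero.mpr n.factorial_ne_zero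

private lemma Epoly_natDegree (m : ℕ) : (Epoly m).natDegree = m := by
  apply le_antisymm
  · apply Polynomial.natDegree_le_iff_coeff_eq_zero.mpr
    intro n hn
    rw [Epoly_coeff, if_neg (by omega)]
  · apply Polynomial.le_natDegree_of_ne_zero
    rw [Epoly_coeff, if_pos le_rfl]
    exact inv_ne_zero (fact_ne m)

private lemma Epoly_leadingCoeff (m : ℕ) :
    (Epoly m).leadingCoeff = ((m.factorial : ℂ))⁻¹ := by
  rw [Polynomial.leadingCoeff, Epoly_natDegree, Epoly_coeff, if_pos le_rfl]

private lemma Epoly_deriv (m : ℕ) (hm : 1 ≤ m) :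
    Polynomial.derivative (Epoly m) = Epoly m - C ((m.factorial : ℂ))⁻¹ * X ^ m := by
  ext n
  rw [Polynomial.coeff_derivative, Polynomial.coeff_sub, Polynomial.coeff_C_mul,
    Polynomial.coeff_X_pow, Epoly_coeff, Epoly_coeff]
  rcases lt_trichotomy n m with h | h | h
  · rw [if_pos (by omega), if_pos (by omega), if_neg (by omega)]
    have h1 : ((n+1).factorial : ℂ) = (n+1) * n.factorial := by
      rw [Nat.factorial_succ]; push_cast; ring
    rw [h1, mul_inv]
    have h2 : ((n : ℂ) + 1) ≠ 0 := Nat.cast_add_one_ne_zero n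
    have h3 : ((n : ℂ) + 1)⁻¹ * ((n : ℂ) + 1) = 1 := inv_mul_cancel₀ h2
    linear_combination ((n.factorial : ℂ))⁻¹ * h3
  · subst h
    rw [if_neg (by omega), if_pos le_rfl, if_pos rfl]
    ring
  · rw [if_neg (by omega), if_neg (by omega), if_neg (by omega)]
    ring

/-- Power sums of the reciprocals of the zeroes of `E_m`. -/
theorem stmt_5 (m : ℕ) (hm : 1 ≤ m) :
    (((Epoly m).roots.map fun α => α⁻¹ ^ 1).sum = -1) ∧
    (∀ t : ℕ, 2 ≤ t → t ≤ m → ((Epoly m).roots.map fun α => α⁻¹ ^ t).sum = 0) ∧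
    (((Epoly m).roots.map fun α => α⁻¹ ^ (m + 1)).sum = (m.factorial : ℂ)⁻¹) ∧
    (((Epoly m).roots.map fun α => α⁻¹ ^ (m + 2)).sum = -(m.factorial : ℂ)⁻¹) := by
  set c : ℂ := ((m.factorial : ℂ))⁻¹ with hc
  set R : Multiset ℂ := (Epoly m).roots with hR
  have hroots_ne : ∀ a ∈ R, a ≠ 0 := by
    intro a ha h0
    have hr : (Epoly m).IsRoot a :=
      Polynomial.isRoot_of_mem_roots ha
    rw [h0] at hr
    have : (Epoly m).coeff 0 = 0 := by
      rw [Polynomial.coeff_zero_eq_eval_zero]; exact hr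
    rw [Epoly_coeff, if_pos (Nat.zero_le m)] at this
    simp at this
  have hsplit : Epoly m = C c * (R.map fun a => X - C a).prod := by
    have h := Polynomial.Splits.eq_prod_roots
      (IsAlgClosed.splits (Epoly m))
    rwa [Epoly_leadingCoeff] at h
  set S : PowerSeries ℂ := (R.map Gser).sum with hSdef
  -- key identity
  have hd1 : ((Polynomial.derivative (Epoly m) : ℂ[X]) : PowerSeries ℂ)
      = ((Epoly m : ℂ[X]) : PowerSeries ℂ) * S := by
    conv_lhs => rw [hsplit, Polynomial.derivative_C_mul]
    rw [Polynomial.coe_mul, prod_deriv R hroots_ne]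
    conv_rhs => rw [hsplit]
    rw [Polynomial.coe_mul]
    ring
  have key : ((Epoly m : ℂ[X]) : PowerSeries ℂ) * (1 - S)
      = PowerSeries.C c * PowerSeries.X ^ m := by
    have h2 : ((Polynomial.derivative (Epoly m) : ℂ[X]) : PowerSeries ℂ)
        = ((Epoly m : ℂ[X]) : PowerSeries ℂ) - PowerSeries.C c * PowerSeries.X ^ m := by
      rw [Epoly_deriv m hm]
      push_cast
      ring
    rw [mul_sub, mul_one, ← hd1, h2]
    ring
  set u : ℕ → ℂ := fun n => PowerSeries.coeff n (1 - S) with hu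
  have equation : ∀ n : ℕ, ∑ k ∈ Finset.range (n+1), (Epoly m).coeff k * u (n - k)
      = if n = m then c else 0 := by
    intro n
    have := congrArg (PowerSeries.coeff n) key
    rw [PowerSeries.coeff_mul, PowerSeries.coeff_C_mul, PowerSeries.coeff_X_pow,
      Finset.Nat.sum_antidiagonal_eq_sum_range_succ_mk] at this
    simp only [Polynomial.coeff_coe] at this
    rw [this]
    split <;> simp
  have ha0 : (Epoly m).coeff 0 = 1 := by rw [Epoly_coeff, if_pos (Nat.zero_le m)]; simp
  have ha1 : (Epoly m).coeff 1 = 1 := by rw [Epoly_coeff, if_pos hm]; simp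
  have hzero : ∀ n, n ≤ m - 1 → u n = 0 := by
    intro n
    induction n using Nat.strong_induction_on with
    | _ n ih =>
      intro hn
      have heq := equation n
      rw [if_neg (by omega), Finset.sum_range_succ'] at heq
      have hx : ∀ k ∈ Finset.range n, (Epoly m).coeff (k+1) * u (n - (k+1)) = 0 := by
        intro k hk
        rw [Finset.mem_range] at hk
        rw [ih (n - (k+1)) (by omega) (by omega), mul_zero]
      rw [Finset.sum_eq_zero hx, zero_add, Nat.sub_zero, ha0, one_mul] at heq
      exact heq
  have hum : u m = c := by
    have heq := equation m
    rw [if_pos rfl, Finset.sum_range_succ'] at heq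
    have hx : ∀ k ∈ Finset.range m, (Epoly m).coeff (k+1) * u (m - (k+1)) = 0 := by
      intro k hk
      rw [Finset.mem_range] at hk
      rw [hzero (m - (k+1)) (by omega), mul_zero]
    rw [Finset.sum_eq_zero hx, zero_add, Nat.sub_zero, ha0, one_mul] at heq
    exact heq
  have hum1 : u (m+1) = -c := by
    have heq := equation (m+1)
    rw [if_neg (by omega), Finset.sum_range_succ'] at heq
    -- inner sum over range (m+1); peel k = 0 once more
    rw [Finset.sum_range_succ'] at heq
    have hx : ∀ j ∈ Finset.range m, (Epoly m).coeff (j+1+1) * u (m + 1 - (j+1+1)) = 0 := by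
      intro j hj
      rw [Finset.mem_range] at hj
      rcases le_or_gt (j+2) m with hle | hlt
      · rw [show m + 1 - (j+1+1) = m - (j+1) by omega, hzero (m - (j+1)) (by omega), mul_zero]
      · rw [Epoly_coeff, if_neg (by omega), zero_mul]
    rw [Finset.sum_eq_zero hx, zero_add, Nat.sub_zero, ha0, one_mul,
      show m + 1 - (0 + 1) = m by omega, ha1, one_mul, hum] at heq
    linear_combination heq
  have hneg : ∀ (s : Multiset ℂ) (f : ℂ → ℂ), (s.map fun a => -(f a)).sum = -((s.map f).sum) := by
    intro s f
    induction s using Multiset.induction_on with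
    | empty => simp
    | cons a t ih => simp only [Multiset.map_cons, Multiset.sum_cons, ih]; ring
  have hcoeffS : ∀ n : ℕ, PowerSeries.coeff n S = -((R.map fun α => α⁻¹ ^ (n+1)).sum) := by
    intro n
    rw [hSdef, map_multiset_sum, Multiset.map_map]
    simp only [Function.comp_def, Gser, PowerSeries.coeff_mk]
    exact hneg R _
  have hu_eq : ∀ n : ℕ, 1 ≤ n → u n = (R.map fun α => α⁻¹ ^ (n+1)).sum := by
    intro n hn
    show PowerSeries.coeff n (1 - S) = _
    rw [map_sub, PowerSeries.coeff_one, if_neg (by omega), hcoeffS n]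
    ring
  have hu0' : PowerSeries.coeff 0 S = 1 := by
    have h0 : u 0 = 0 := hzero 0 (Nat.zero_le _)
    have h1 : PowerSeries.coeff 0 ((1 : PowerSeries ℂ) - S) = 0 := h0
    rw [map_sub, PowerSeries.coeff_one, if_pos rfl] at h1
    linear_combination -h1
  refine ⟨?_, ?_, ?_, ?_⟩
  · have h := hcoeffS 0
    rw [hu0'] at h
    have h2 : (R.map fun α => α⁻¹ ^ (0+1)).sum = -1 := by linear_combination h
    simpa using h2
  · intro t h2 htm
    obtain ⟨s, rfl⟩ : ∃ s, t = s + 1 := ⟨t-1, by omega⟩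
    rw [← hu_eq s (by omega)]
    exact hzero s (by omega)
  · rw [← hu_eq m (by omega)]
    exact hum
  · rw [show m + 2 = (m+1) + 1 from rfl, ← hu_eq (m+1) (by omega)]
    exact hum1
end

section
/- For |x| < (m+2)/2, we have |(m+1)! \sum_{k=1}^{\infty} x^k/(m+1+k)!| < 1, and consequently x^{m+1}/((m+1)! R_m(x)) can be expanded as a convergent geometric series, where R_m(x) = \sum_{k=m+1}^{\infty} x^k/k!. -/
/-- For `|x| < (m+2)/2`, the quantity `S = (m+1)! ∑_{k≥1} x^k/(m+1+k)!` has `|S| < 1`,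
and consequently `x^{m+1}/((m+1)! R_m(x))` equals the convergent geometric series
`∑_j (-S)^j`, where `R_m(x) = ∑_{k≥m+1} x^k/k!`. -/
theorem stmt_6 (m : ℕ) (x : ℂ) (hx : ‖x‖ < ((m : ℝ) + 2) / 2) :
    ‖(((m + 1).factorial : ℂ)) * ∑' k : ℕ, x ^ (k + 1) / (((m + 2 + k).factorial : ℂ))‖ < 1 ∧
    (x ≠ 0 →
      x ^ (m + 1) /
          (((m + 1).factorial : ℂ) * ∑' k : ℕ, x ^ (k + (m + 1)) / (((k + (m + 1)).factorial : ℂ)))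
        = ∑' j : ℕ,
            (-(((m + 1).factorial : ℂ) * ∑' k : ℕ, x ^ (k + 1) / (((m + 2 + k).factorial : ℂ)))) ^ j) := by
  have hm2 : (0:ℝ) < (m:ℝ) + 2 := by positivity
  set r : ℝ := ‖x‖ / ((m:ℝ) + 2) with hr_def
  have hr0 : 0 ≤ r := by positivity
  have hr : r < 1/2 := by
    rw [hr_def, div_lt_iff₀ hm2]
    linarith [hx]
  have hr1 : r < 1 := by linarith
  set g : ℕ → ℂ := fun k => ((m + 1).factorial : ℂ) * (x ^ k / (((m + 1 + k).factorial : ℂ))) with hg_def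
  have hfac : ∀ k : ℕ, ((m+1).factorial : ℝ) * ((m:ℝ)+2)^k ≤ ((m+1+k).factorial : ℝ) := by
    intro k
    have := Nat.factorial_mul_pow_le_factorial (m := m + 1) (n := k)
    calc ((m+1).factorial : ℝ) * ((m:ℝ)+2)^k
        = (((m+1).factorial * (m+2)^k : ℕ) : ℝ) := by push_cast; ring
      _ ≤ ((m+1+k).factorial : ℝ) := by exact_mod_cast this
  have hbound : ∀ k : ℕ, ‖g k‖ ≤ r ^ k := by
    intro k
    have hfk : (0:ℝ) < ((m+1+k).factorial : ℝ) := by exact_mod_cast (m+1+k).factorial_pos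
    have hxk : (0:ℝ) ≤ ‖x‖ ^ k := by positivity
    rw [hg_def]
    simp only [norm_mul, norm_div, norm_pow, Complex.norm_natCast]
    rw [hr_def, div_pow, mul_div_assoc', div_le_div_iff₀ hfk (by positivity : (0:ℝ) < ((m:ℝ)+2)^k)]
    calc ((m+1).factorial : ℝ) * ‖x‖ ^ k * ((m:ℝ)+2)^k
        = (((m+1).factorial : ℝ) * ((m:ℝ)+2)^k) * ‖x‖ ^ k := by ring
      _ ≤ ((m+1+k).factorial : ℝ) * ‖x‖ ^ k := by
          exact mul_le_mul_of_nonneg_right (hfac k) hxk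
      _ = ‖x‖ ^ k * ((m+1+k).factorial : ℝ) := by ring
  have hsum_geo : Summable (fun k : ℕ => r ^ k) := summable_geometric_of_lt_one hr0 hr1
  have hsum_g : Summable g := Summable.of_norm_bounded hsum_geo hbound
  have hsum_g1 : Summable (fun k => g (k + 1)) := (summable_nat_add_iff 1).2 hsum_g
  have hF0 : ((m + 1).factorial : ℂ) ≠ 0 := by exact_mod_cast (m+1).factorial_ne_zero
  -- identify S with ∑' k, g (k+1)
  have hS : ((m + 1).factorial : ℂ) * ∑' k : ℕ, x ^ (k + 1) / (((m + 2 + k).factorial : ℂ))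
      = ∑' k : ℕ, g (k + 1) := by
    rw [← tsum_mul_left]
    congr 1; funext k
    rw [hg_def]
    simp only
    rw [show m + 1 + (k + 1) = m + 2 + k from by omega]
  have hg0 : g 0 = 1 := by
    rw [hg_def]; simp [hF0]
  -- norm bound on S
  have hnormS : ‖∑' k : ℕ, g (k + 1)‖ < 1 := by
    have h1 : ‖∑' k : ℕ, g (k + 1)‖ ≤ ∑' k : ℕ, r ^ (k + 1) := by
      refine tsum_of_norm_bounded ?_ (fun k => hbound (k + 1))
      exact ((summable_nat_add_iff 1).2 hsum_geo).hasSum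
    have h2 : ∑' k : ℕ, r ^ (k + 1) = r * (1 - r)⁻¹ := by
      calc ∑' k : ℕ, r ^ (k + 1) = ∑' k : ℕ, r * r ^ k := by
            congr 1; funext k; ring
        _ = r * ∑' k : ℕ, r ^ k := tsum_mul_left
        _ = r * (1 - r)⁻¹ := by rw [tsum_geometric_of_lt_one hr0 hr1]
    have h3 : r * (1 - r)⁻¹ < 1 := by
      rw [mul_inv_lt_iff₀ (by linarith)]
      linarith
    calc ‖∑' k : ℕ, g (k + 1)‖ ≤ ∑' k : ℕ, r ^ (k + 1) := h1
      _ = r * (1 - r)⁻¹ := h2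
      _ < 1 := h3
  have part1 : ‖(((m + 1).factorial : ℂ)) * ∑' k : ℕ, x ^ (k + 1) / (((m + 2 + k).factorial : ℂ))‖ < 1 := by
    rw [hS]; exact hnormS
  refine ⟨part1, fun hx0 => ?_⟩
  set S : ℂ := ((m + 1).factorial : ℂ) * ∑' k : ℕ, x ^ (k + 1) / (((m + 2 + k).factorial : ℂ)) with hSdef
  have hSnorm : ‖S‖ < 1 := part1
  have h1S : (1 : ℂ) + S ≠ 0 := by
    intro h
    have : S = -1 := by linear_combination h
    rw [this] at hSnorm
    simp at hSnorm
  -- denominator identity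
  have hT : ((m + 1).factorial : ℂ) * ∑' k : ℕ, x ^ (k + (m + 1)) / (((k + (m + 1)).factorial : ℂ))
      = x ^ (m + 1) * (1 + S) := by
    have step1 : ((m + 1).factorial : ℂ) * ∑' k : ℕ, x ^ (k + (m + 1)) / (((k + (m + 1)).factorial : ℂ))
        = ∑' k : ℕ, x ^ (m + 1) * g k := by
      rw [← tsum_mul_left]
      congr 1; funext k
      rw [hg_def]
      simp only
      rw [show k + (m + 1) = m + 1 + k from by omega, pow_add]
      ring
    rw [step1, tsum_mul_left, Summable.tsum_eq_zero_add hsum_g, hg0, ← hS]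
  rw [hT]
  have hxm : x ^ (m + 1) ≠ 0 := pow_ne_zero _ hx0
  rw [div_mul_eq_div_div, div_self hxm]
  rw [tsum_geometric_of_norm_lt_one (by rwa [norm_neg] : ‖-S‖ < 1)]
  rw [sub_neg_eq_add]
  exact one_div _
end

section
/- Let W be a prefix-closed set of words with letters in [n] and let W_k be the words of length k in W. If \pi is chosen uniformly at random from S_{m,n}, then Pr[L_{m,n}(\pi; W) \ge k] \le |W_k| m^k / k!. -/
def baseWord (m n : ℕ) : List ℕ := (List.range n).flatMap fun i => List.replicate m (i + 1)

def multisetPerms (m n : ℕ) : Finset (List ℕ) := (baseWord m n).permutations.toFinset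

lemma mem_multisetPerms {m n : ℕ} {π : List ℕ} :
    π ∈ multisetPerms m n ↔ List.Perm π (baseWord m n) := by
  simp [multisetPerms, List.mem_permutations]

lemma count_baseWord (m n a : ℕ) :
    List.count a (baseWord m n) = if 1 ≤ a ∧ a ≤ n then m else 0 := by
  induction n with
  | zero => simp [baseWord]; intro h1 h2; omega
  | succ n ih =>
    have h : baseWord m (n + 1) = baseWord m n ++ List.replicate m (n + 1) := by
      simp [baseWord, List.range_succ]
    rw [h, List.count_append, ih, List.count_replicate]
    by_cases h1 : n + 1 = a <;> split_ifs <;> simp_all <;> omega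

lemma count_take_lt {l : List ℕ} {p a : ℕ} (hp : p < l.length) (ha : l[p] = a) :
    List.count a (l.take p) < List.count a l := by
  conv_rhs => rw [← List.take_append_drop p l]
  rw [List.count_append, List.drop_eq_getElem_cons hp, ha, List.count_cons_self]
  omega

lemma count_take_mono {l : List ℕ} {p q a : ℕ} (hp : p < l.length) (ha : l[p] = a)
    (hpq : p < q) : List.count a (l.take p) < List.count a (l.take q) := by
  have h1 : l.take (p + 1) = l.take p ++ [a] := by
    rw [List.take_succ, List.getElem?_eq_getElem hp, ha]; rfl
  have h2 : List.count a (l.take (p + 1)) ≤ List.count a (l.take q) :=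
    (List.take_prefix_take_left hpq).sublist.count_le a
  rw [h1, List.count_append] at h2
  simp at h2; omega

lemma pos_unique {l : List ℕ} {a : ℕ} {p q : ℕ} (hp : p < l.length) (hq : q < l.length)
    (hpa : l[p] = a) (hqa : l[q] = a)
    (h : List.count a (l.take p) = List.count a (l.take q)) : p = q := by
  rcases lt_trichotomy p q with hlt | heq | hgt
  · exact absurd h (count_take_mono hp hpa hlt).ne
  · exact heq
  · exact absurd h.symm (count_take_mono hq hqa hgt).ne

lemma ofFn_comp_perm {N : ℕ} (g : Fin N → ℕ) (e : Equiv.Perm (Fin N)) :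
    List.Perm (List.ofFn (fun j => g (e j))) (List.ofFn g) := by
  have h1 : List.ofFn (fun j => g (e j)) = List.map g (List.map e (List.finRange N)) := by
    simp [List.ofFn_eq_map, List.map_map]
  have hperm : List.Perm (List.map (⇑e) (List.finRange N)) (List.finRange N) := by
    rw [List.perm_iff_count]
    intro a
    rw [List.count_eq_one_of_mem ((List.nodup_finRange N).map e.injective)
        (List.mem_map.mpr ⟨e.symm a, List.mem_finRange _, e.apply_symm_apply a⟩),
      List.count_eq_one_of_mem (List.nodup_finRange N) (List.mem_finRange a)]
  rw [h1, List.ofFn_eq_map]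
  exact hperm.map g

noncomputable def subEmb {w π : List ℕ} (h : List.Sublist w π) : Fin w.length ↪o Fin π.length :=
  (List.sublist_iff_exists_fin_orderEmbedding_get_eq.mp h).choose

lemma subEmb_spec {w π : List ℕ} (h : List.Sublist w π) (i : Fin w.length) :
    w.get i = π.get (subEmb h i) :=
  (List.sublist_iff_exists_fin_orderEmbedding_get_eq.mp h).choose_spec i

noncomputable def pickEmb (L : ℕ) (w π : List ℕ) (h : List.Sublist w π) (hL : π.length = L) :
    Fin w.length → Fin L :=
  fun i => Fin.cast hL (subEmb h i)

lemma pickEmb_strictMono (L : ℕ) (w π : List ℕ) (h : List.Sublist w π) (hL : π.length = L) :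
    StrictMono (pickEmb L w π h hL) := by
  intro a b hab
  have h2 : subEmb h a < subEmb h b := (subEmb h).strictMono hab
  simp only [pickEmb, Fin.lt_def, Fin.coe_cast]
  exact h2

lemma pickEmb_get (L : ℕ) (w π : List ℕ) (h : List.Sublist w π) (hL : π.length = L)
    (i : Fin w.length) :
    π.get (Fin.cast hL.symm (pickEmb L w π h hL i)) = w.get i := by
  simp only [pickEmb, Fin.cast_cast, Fin.cast_eq_self]
  exact (subEmb_spec h i).symm

noncomputable def permOf (L : ℕ) (w π : List ℕ) (h : List.Sublist w π) (hL : π.length = L)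
    (σ : Equiv.Perm (Fin w.length)) : Equiv.Perm (Fin L) :=
  σ.viaFintypeEmbedding ⟨pickEmb L w π h hL, (pickEmb_strictMono L w π h hL).injective⟩

lemma permOf_apply (L : ℕ) (w π : List ℕ) (h : List.Sublist w π) (hL : π.length = L)
    (σ : Equiv.Perm (Fin w.length)) (i : Fin w.length) :
    permOf L w π h hL σ (pickEmb L w π h hL i) = pickEmb L w π h hL (σ i) :=
  Equiv.Perm.viaFintypeEmbedding_apply_image σ _ i

def rearr (L : ℕ) (π : List ℕ) (hL : π.length = L) (e : Equiv.Perm (Fin L)) : List ℕ :=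
  List.ofFn fun j => π.get (Fin.cast hL.symm (e j))

lemma rearr_length (L : ℕ) (π : List ℕ) (hL : π.length = L) (e : Equiv.Perm (Fin L)) :
    (rearr L π hL e).length = L := by simp [rearr]

lemma rearr_getElem (L : ℕ) (π : List ℕ) (hL : π.length = L) (e : Equiv.Perm (Fin L))
    (j : ℕ) (hj : j < L) :
    (rearr L π hL e)[j]'(by rw [rearr_length]; exact hj) =
      π.get (Fin.cast hL.symm (e ⟨j, hj⟩)) := by
  simp [rearr]

lemma rearr_perm (L : ℕ) (π : List ℕ) (hL : π.length = L) (e : Equiv.Perm (Fin L)) :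
    List.Perm (rearr L π hL e) π := by
  subst hL
  have : rearr π.length π rfl e = List.ofFn (fun j => π.get (e j)) := by
    simp [rearr]
  rw [this]
  exact (ofFn_comp_perm π.get e).trans (by rw [List.ofFn_get])

lemma rearr_getElem? (L : ℕ) (π : List ℕ) (hL : π.length = L) (e : Equiv.Perm (Fin L))
    (j : ℕ) (hj : j < L) :
    (rearr L π hL e)[j]? = some (π.get (Fin.cast hL.symm (e ⟨j, hj⟩))) := by
  rw [List.getElem?_eq_getElem (by rw [rearr_length]; exact hj),
    rearr_getElem L π hL e j hj]



lemma key (m n : ℕ) (hm : 1 ≤ m) (w : List ℕ)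
    (hwlet : ∀ a ∈ w, a ∈ Finset.Icc 1 n) :
    ((multisetPerms m n).filter fun π => w.Sublist π).card * (w.length).factorial
      ≤ m ^ w.length * (multisetPerms m n).card := by
  classical
  have hm0 : 0 < m := hm
  set L := (baseWord m n).length with hLdef
  let F : List ℕ × Equiv.Perm (Fin w.length) → List ℕ × (Fin w.length → Fin m) :=
    fun x =>
      if h : List.Sublist w x.1 ∧ x.1.length = L then
        (rearr L x.1 h.2 (permOf L w x.1 h.1 h.2 x.2),
         fun i =>
           ⟨((rearr L x.1 h.2 (permOf L w x.1 h.1 h.2 x.2)).take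
               ((pickEmb L w x.1 h.1 h.2 (x.2⁻¹ i) : ℕ))).count (w.get i) % m,
            Nat.mod_lt _ hm0⟩)
      else (x.1, fun _ => ⟨0, hm0⟩)
  have hFeq : ∀ (π : List ℕ) (σ : Equiv.Perm (Fin w.length))
      (h : List.Sublist w π ∧ π.length = L),
      F (π, σ) = (rearr L π h.2 (permOf L w π h.1 h.2 σ),
        fun i => ⟨((rearr L π h.2 (permOf L w π h.1 h.2 σ)).take
            ((pickEmb L w π h.1 h.2 (σ⁻¹ i) : ℕ))).count (w.get i) % m,
          Nat.mod_lt _ hm0⟩) := fun π σ h => dif_pos h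
  have factA : ∀ (π : List ℕ) (σ : Equiv.Perm (Fin w.length))
      (h1 : List.Sublist w π) (h2 : π.length = L) (i : Fin w.length),
      (rearr L π h2 (permOf L w π h1 h2 σ))[(pickEmb L w π h1 h2 i : ℕ)]?
        = some (w.get (σ i)) := by
    intro π σ h1 h2 i
    rw [rearr_getElem? L π h2 _ _ (pickEmb L w π h1 h2 i).isLt]
    simp only [Fin.eta, permOf_apply, pickEmb_get]
  have factB : ∀ (ρ : List ℕ), List.Perm ρ (baseWord m n) → ∀ a ∈ w, ρ.count a = m := by
    intro ρ hρ a ha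
    rw [hρ.count_eq, count_baseWord]
    have h := hwlet a ha
    rw [Finset.mem_Icc] at h
    rw [if_pos h]
  have hcard : (((multisetPerms m n).filter fun π => List.Sublist w π) ×ˢ
      (Finset.univ : Finset (Equiv.Perm (Fin w.length)))).card ≤
      ((multisetPerms m n) ×ˢ (Finset.univ : Finset (Fin w.length → Fin m))).card := by
    apply Finset.card_le_card_of_injOn F
    · rintro ⟨π, σ⟩ hx
      simp only [Finset.mem_coe, Finset.mem_product, Finset.mem_filter] at hx
      obtain ⟨⟨hπS, hsub⟩, -⟩ := hx
      have hπB := mem_multisetPerms.mp hπS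
      have h2 : π.length = L := hπB.length_eq
      rw [hFeq π σ ⟨hsub, h2⟩]
      simp only [Finset.mem_coe, Finset.mem_product, Finset.mem_univ, and_true]
      exact mem_multisetPerms.mpr ((rearr_perm L π h2 _).trans hπB)
    · rintro ⟨π₁, σ₁⟩ hx₁ ⟨π₂, σ₂⟩ hx₂ heq
      simp only [Finset.coe_product, Set.mem_prod, Finset.mem_coe, Finset.mem_filter,
        Finset.mem_univ, and_true] at hx₁ hx₂
      obtain ⟨hπS₁, hsub₁⟩ := hx₁
      obtain ⟨hπS₂, hsub₂⟩ := hx₂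
      have hπB₁ := mem_multisetPerms.mp hπS₁
      have hπB₂ := mem_multisetPerms.mp hπS₂
      have hl₁ : π₁.length = L := hπB₁.length_eq
      have hl₂ : π₂.length = L := hπB₂.length_eq
      rw [hFeq π₁ σ₁ ⟨hsub₁, hl₁⟩, hFeq π₂ σ₂ ⟨hsub₂, hl₂⟩] at heq
      obtain ⟨heq1, heq2⟩ := Prod.ext_iff.mp heq
      set f₁ := pickEmb L w π₁ hsub₁ hl₁ with hf₁def
      set f₂ := pickEmb L w π₂ hsub₂ hl₂ with hf₂def
      set e₁ := permOf L w π₁ hsub₁ hl₁ σ₁ with he₁def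
      set e₂ := permOf L w π₂ hsub₂ hl₂ σ₂ with he₂def
      set ρ := rearr L π₁ hl₁ e₁ with hρdef
      have hρ₂ : rearr L π₂ hl₂ e₂ = ρ := heq1.symm
      have hρB : List.Perm ρ (baseWord m n) := (rearr_perm L π₁ hl₁ e₁).trans hπB₁
      have hρlen : ρ.length = L := rearr_length L π₁ hl₁ e₁
      have hget : ∀ (p : ℕ) (hp : p < L) (a : ℕ), ρ[p]? = some a →
          ρ[p]'(by omega) = a := by
        intro p hp a h
        rw [List.getElem?_eq_getElem (by omega)] at h
        exact Option.some.inj h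
      have hval : ∀ i : Fin w.length,
          ρ[(f₁ (σ₁⁻¹ i) : ℕ)]'(by rw [hρlen]; exact (f₁ (σ₁⁻¹ i)).isLt) = w.get i := by
        intro i
        refine hget _ (f₁ (σ₁⁻¹ i)).isLt _ ?_
        have := factA π₁ σ₁ hsub₁ hl₁ (σ₁⁻¹ i)
        simpa using this
      have hval₂ : ∀ i : Fin w.length,
          ρ[(f₂ (σ₂⁻¹ i) : ℕ)]'(by rw [hρlen]; exact (f₂ (σ₂⁻¹ i)).isLt) = w.get i := by
        intro i
        refine hget _ (f₂ (σ₂⁻¹ i)).isLt _ ?_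
        have := factA π₂ σ₂ hsub₂ hl₂ (σ₂⁻¹ i)
        rw [hρ₂] at this
        simpa using this
      have hwmem : ∀ i : Fin w.length, w.get i ∈ w := fun i => w.get_mem i
      have hcnt : ∀ (p : ℕ) (hp : p < L) (i : Fin w.length),
          ρ[p]'(by omega) = w.get i → (ρ.take p).count (w.get i) < m := by
        intro p hp i hpi
        have htot : ρ.count (w.get i) = m := factB ρ hρB _ (hwmem i)
        have := count_take_lt (l := ρ) (p := p) (a := w.get i) (by omega) hpi
        omega
      have hpos : ∀ i : Fin w.length, f₁ (σ₁⁻¹ i) = f₂ (σ₂⁻¹ i) := by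
        intro i
        have hr := congrArg Fin.val (congrFun heq2 i)
        simp only at hr
        have hc₁ := hcnt (f₁ (σ₁⁻¹ i) : ℕ) (f₁ (σ₁⁻¹ i)).isLt i (hval i)
        have hc₂ := hcnt (f₂ (σ₂⁻¹ i) : ℕ) (f₂ (σ₂⁻¹ i)).isLt i (hval₂ i)
        rw [hρ₂] at hr
        rw [Nat.mod_eq_of_lt hc₁, Nat.mod_eq_of_lt hc₂] at hr
        exact Fin.ext (pos_unique (l := ρ) (a := w.get i)
          (by rw [hρlen]; exact (f₁ (σ₁⁻¹ i)).isLt)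
          (by rw [hρlen]; exact (f₂ (σ₂⁻¹ i)).isLt)
          (hval i) (hval₂ i) hr)
      have hsm₁ : StrictMono f₁ := pickEmb_strictMono L w π₁ hsub₁ hl₁
      have hsm₂ : StrictMono f₂ := pickEmb_strictMono L w π₂ hsub₂ hl₂
      have hginj : Function.Injective (fun i => f₁ (σ₁⁻¹ i)) :=
        hsm₁.injective.comp (Equiv.injective _)
      have hscard : (Finset.image (fun i => f₁ (σ₁⁻¹ i)) Finset.univ).card = w.length := by
        rw [Finset.card_image_of_injective _ hginj, Finset.card_univ, Fintype.card_fin]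
      have hf₁ : f₁ = (Finset.image (fun i => f₁ (σ₁⁻¹ i)) Finset.univ).orderEmbOfFin hscard :=
        Finset.orderEmbOfFin_unique hscard
          (fun x => Finset.mem_image.mpr ⟨σ₁ x, Finset.mem_univ _, by simp⟩) hsm₁
      have hf₂ : f₂ = (Finset.image (fun i => f₁ (σ₁⁻¹ i)) Finset.univ).orderEmbOfFin hscard :=
        Finset.orderEmbOfFin_unique hscard
          (fun x => Finset.mem_image.mpr ⟨σ₂ x, Finset.mem_univ _, by
            rw [hpos (σ₂ x)]; simp⟩) hsm₂
      have hff : f₁ = f₂ := hf₁.trans hf₂.symm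
      have hσinv : σ₁⁻¹ = σ₂⁻¹ := by
        apply Equiv.ext
        intro i
        apply hsm₁.injective
        rw [hpos i, hff]
      have hσ : σ₁ = σ₂ := by
        rw [← inv_inv σ₁, ← inv_inv σ₂, hσinv]
      have hE : e₁ = e₂ := by
        rw [he₁def, he₂def, permOf, permOf, hσ]
        congr 1
        exact Function.Embedding.ext fun x => congrFun hff x
      have hππ : π₁ = π₂ := by
        apply List.ext_getElem (by omega)
        intro j hj₁ hj₂
        have hjL : j < L := by omega
        have a₁ := rearr_getElem? L π₁ hl₁ e₁ ((e₁.symm ⟨j, hjL⟩ : ℕ)) (e₁.symm ⟨j, hjL⟩).isLt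
        have a₂ := rearr_getElem? L π₂ hl₂ e₂ ((e₂.symm ⟨j, hjL⟩ : ℕ)) (e₂.symm ⟨j, hjL⟩).isLt
        simp only [Fin.eta, Equiv.apply_symm_apply] at a₁ a₂
        rw [hρ₂] at a₂
        rw [← hE] at a₂
        have := (a₁.symm.trans a₂)
        have h2 := Option.some.inj this
        simpa [List.get_eq_getElem] using h2
      exact Prod.ext hππ hσ
  rw [Finset.card_product, Finset.card_product, Finset.card_univ, Finset.card_univ,
    Fintype.card_perm, Fintype.card_fin, Fintype.card_fun, Fintype.card_fin,
    Fintype.card_fin] at hcard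
  calc ((multisetPerms m n).filter fun π => w.Sublist π).card * (w.length).factorial
      ≤ (multisetPerms m n).card * m ^ w.length := hcard
    _ = m ^ w.length * (multisetPerms m n).card := mul_comm _ _
/-- If `W` is a prefix-closed set of words with distinct letters in `[n]`, `W_k` is the set of
words of length `k` in `W`, and `π` is uniform on `S_{m,n}`, then
`Pr[L_{m,n}(π; W) ≥ k] ≤ |W_k| m^k / k!`. -/
theorem stmt_12 (m n k : ℕ) (hm : 1 ≤ m) (W : Finset (List ℕ))
    (hletters : ∀ w ∈ W, ∀ a ∈ w, a ∈ Finset.Icc 1 n)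
    (hnodup : ∀ w ∈ W, w.Nodup)
    (hprefix : ∀ w ∈ W, ∀ p : List ℕ, p <+: w → p ∈ W) :
    ((multisetPerms m n).filter fun π => ∃ w ∈ W, w.length = k ∧ w.Sublist π).card
        * k.factorial
      ≤ (W.filter fun w => w.length = k).card * m ^ k * (multisetPerms m n).card := by
  classical
  set S := multisetPerms m n with hS
  set Wk := W.filter fun w => w.length = k with hWk
  have hsubset : (S.filter fun π => ∃ w ∈ W, w.length = k ∧ w.Sublist π) ⊆
      Wk.biUnion fun w => S.filter fun π => w.Sublist π := by
    intro π hπ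
    rw [Finset.mem_filter] at hπ
    obtain ⟨hπS, w, hwW, hwk, hsub⟩ := hπ
    rw [Finset.mem_biUnion]
    exact ⟨w, Finset.mem_filter.mpr ⟨hwW, hwk⟩, Finset.mem_filter.mpr ⟨hπS, hsub⟩⟩
  have h1 : (S.filter fun π => ∃ w ∈ W, w.length = k ∧ w.Sublist π).card ≤
      ∑ w ∈ Wk, (S.filter fun π => w.Sublist π).card :=
    (Finset.card_le_card hsubset).trans (Finset.card_biUnion_le)
  calc (S.filter fun π => ∃ w ∈ W, w.length = k ∧ w.Sublist π).card * k.factorial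
      ≤ (∑ w ∈ Wk, (S.filter fun π => w.Sublist π).card) * k.factorial :=
        Nat.mul_le_mul_right _ h1
    _ = ∑ w ∈ Wk, (S.filter fun π => w.Sublist π).card * k.factorial :=
        Finset.sum_mul ..
    _ ≤ ∑ w ∈ Wk, m ^ k * S.card := by
        apply Finset.sum_le_sum
        intro w hw
        rw [hWk, Finset.mem_filter] at hw
        obtain ⟨hwW, hwk⟩ := hw
        have := key m n hm w (hletters w hwW)
        rw [hwk] at this
        exact this
    _ = Wk.card * (m ^ k * S.card) := by
        rw [Finset.sum_const, smul_eq_mul]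
    _ = Wk.card * m ^ k * S.card := by ring
end

section
/- Let T \subseteq [m]^n be such that any two distinct x, y \in T have Hamming distance at least \delta. Then the probability that a uniformly random multiset permutation \pi \in S_{m,n} contains the word 1 2 \cdots n as a subsequence is at least (|T|/n!)(1 - |T|/\delta!). -/
open Finset

theorem count_core {M k l : ℕ} (s : Fin k → Fin M) (t : Fin l → Fin M)
    (hs : Function.Injective s) (ht : Function.Injective t)
    (hst : ∀ i j, s i ≠ t j) :
    (Finset.univ.filter fun g : Equiv.Perm (Fin M) =>
        StrictMono (fun i => g (s i)) ∧ StrictMono (fun j => g (t j))).card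
      * (k.factorial * l.factorial) = M.factorial := by
  classical
  set Q := (Finset.univ.filter fun g : Equiv.Perm (Fin M) =>
        StrictMono (fun i => g (s i)) ∧ StrictMono (fun j => g (t j))) with hQ
  -- combined embedding
  have hcinj : Function.Injective (Sum.elim s t) := by
    rintro (i | i) (j | j) h <;> simp only [Sum.elim_inl, Sum.elim_inr] at h
    · rw [hs h]
    · exact absurd h (hst _ _)
    · exact absurd h.symm (hst _ _)
    · rw [ht h]
  set c : Fin k ⊕ Fin l ↪ Fin M := ⟨Sum.elim s t, hcinj⟩ with hc
  set e : Equiv.Perm (Fin k) → Equiv.Perm (Fin l) → Equiv.Perm (Fin M) :=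
    fun α β => Equiv.Perm.viaEmbedding (Equiv.sumCongr α β) c with he
  have hes : ∀ α β i, e α β (s i) = s (α i) := by
    intro α β i
    have := Equiv.Perm.viaEmbedding_apply (Equiv.sumCongr α β) c (Sum.inl i)
    simpa [hc] using this
  have het : ∀ α β j, e α β (t j) = t (β j) := by
    intro α β j
    have := Equiv.Perm.viaEmbedding_apply (Equiv.sumCongr α β) c (Sum.inr j)
    simpa [hc] using this
  have key : (Q ×ˢ ((Finset.univ : Finset (Equiv.Perm (Fin k))) ×ˢ
      (Finset.univ : Finset (Equiv.Perm (Fin l))))).card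
      = (Finset.univ : Finset (Equiv.Perm (Fin M))).card := by
    apply Finset.card_nbij' (i := fun p => (e p.2.1 p.2.2).trans p.1)
      (j := fun h => (((e (Tuple.sort (fun i => h (s i)))⁻¹ (Tuple.sort (fun j => h (t j)))⁻¹).symm.trans h),
        ((Tuple.sort (fun i => h (s i)))⁻¹, (Tuple.sort (fun j => h (t j)))⁻¹)))
    · intro p _; exact Finset.mem_univ _
    · -- membership of inverse image
      rintro h -
      set α := (Tuple.sort (fun i => h (s i)))⁻¹ with hα
      set β := (Tuple.sort (fun j => h (t j)))⁻¹ with hβ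
      simp only [Finset.mem_coe, Finset.mem_product, Finset.mem_univ, and_true]
      rw [hQ, Finset.mem_filter]
      refine ⟨Finset.mem_univ _, ?_, ?_⟩
      · have h1 : ∀ i, (e α β).symm (s i) = s (α⁻¹ i) := by
          intro i
          apply (e α β).injective
          rw [Equiv.apply_symm_apply, hes, ← Equiv.Perm.mul_apply, mul_inv_cancel, Equiv.Perm.one_apply]
        have : (fun i => ((e α β).symm.trans h) (s i)) = (fun i => h (s i)) ∘ (Tuple.sort (fun i => h (s i))) := by
          funext i
          simp only [Equiv.trans_apply, h1]
          simp only [hα, inv_inv, Function.comp_apply]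
        rw [this]
        exact (Tuple.monotone_sort _).strictMono_of_injective
          ((h.injective.comp hs).comp (Equiv.injective _))
      · have h1 : ∀ j, (e α β).symm (t j) = t (β⁻¹ j) := by
          intro j
          apply (e α β).injective
          rw [Equiv.apply_symm_apply, het, ← Equiv.Perm.mul_apply, mul_inv_cancel, Equiv.Perm.one_apply]
        have : (fun j => ((e α β).symm.trans h) (t j)) = (fun j => h (t j)) ∘ (Tuple.sort (fun j => h (t j))) := by
          funext j
          simp only [Equiv.trans_apply, h1]
          simp only [hβ, inv_inv, Function.comp_apply]
        rw [this]
        exact (Tuple.monotone_sort _).strictMono_of_injective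
          ((h.injective.comp ht).comp (Equiv.injective _))
    · -- left inverse
      rintro ⟨g, α, β⟩ hp
      rw [Finset.mem_coe, Finset.mem_product, hQ, Finset.mem_filter] at hp
      obtain ⟨⟨-, hgs, hgt⟩, -⟩ := hp
      set h := (e α β).trans g with hh
      have hsort1 : Tuple.sort (fun i => h (s i)) = α⁻¹ := by
        symm
        rw [Tuple.eq_sort_iff]
        constructor
        · have : ((fun i => h (s i)) ∘ ⇑α⁻¹) = fun i => g (s i) := by
            funext i
            simp only [hh, Equiv.trans_apply, Function.comp_apply]
            rw [hes, ← Equiv.Perm.mul_apply, mul_inv_cancel, Equiv.Perm.one_apply]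
          rw [this]; exact hgs.monotone
        · intro i j hij hfeq
          exfalso
          have : (α⁻¹ i) = (α⁻¹ j) := by
            exact hs (h.injective hfeq)
          exact hij.ne (α⁻¹.injective this)
      have hsort2 : Tuple.sort (fun j => h (t j)) = β⁻¹ := by
        symm
        rw [Tuple.eq_sort_iff]
        constructor
        · have : ((fun j => h (t j)) ∘ ⇑β⁻¹) = fun j => g (t j) := by
            funext j
            simp only [hh, Equiv.trans_apply, Function.comp_apply]
            rw [het, ← Equiv.Perm.mul_apply, mul_inv_cancel, Equiv.Perm.one_apply]
          rw [this]; exact hgt.monotone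
        · intro i j hij hfeq
          exfalso
          have : (β⁻¹ i) = (β⁻¹ j) := by
            exact ht (h.injective hfeq)
          exact hij.ne (β⁻¹.injective this)
      simp only [← hh, hsort1, hsort2, inv_inv]
      refine Prod.ext ?_ rfl
      simp only [hh]
      ext u
      simp
    · rintro h -
      ext u
      simp
  have hcard : (Q ×ˢ ((Finset.univ : Finset (Equiv.Perm (Fin k))) ×ˢ
      (Finset.univ : Finset (Equiv.Perm (Fin l))))).card = Q.card * (k.factorial * l.factorial) := by
    simp [Finset.card_product, Finset.card_univ, Fintype.card_perm, Fintype.card_fin]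
  rw [hcard] at key
  rw [key]
  simp [Finset.card_univ, Fintype.card_perm, Fintype.card_fin]

-- single-event corollary handled later

theorem baseWord_eq (m n : ℕ) (hm : 1 ≤ m) :
    baseWord m n = List.ofFn (fun p : Fin (m * n) => (p : ℕ) / m + 1) := by
  induction n with
  | zero =>
      have : m * 0 = 0 := by ring
      simp [baseWord]
  | succ n ih =>
      have hmn : m * (n + 1) = m * n + m := by ring
      have : baseWord m (n + 1) = baseWord m n ++ List.replicate m (n + 1) := by
        simp [baseWord, List.range_succ]
      rw [this, ih, List.ofFn_congr hmn, List.ofFn_add]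
      congr 1
      have key : (fun j : Fin m => ((Fin.cast hmn.symm (Fin.natAdd (m*n) j) : Fin (m*(n+1))) : ℕ) / m + 1)
          = fun _ : Fin m => n + 1 := by
        funext j
        simp only [Fin.coe_cast, Fin.coe_natAdd]
        have h1 : (m * n + (j : ℕ)) / m = n := by
          rw [Nat.mul_add_div hm, Nat.div_eq_of_lt j.2, Nat.add_zero]
        rw [h1]
      rw [key, List.ofFn_const]

theorem count_ofFn {M : ℕ} (f : Fin M → ℕ) (a : ℕ) :
    (List.ofFn f).count a = (Finset.univ.filter fun i => f i = a).card := by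
  classical
  rw [List.ofFn_eq_map]
  rw [List.count_eq_countP, List.countP_map, List.countP_eq_length_filter]
  rw [Finset.card_def, Finset.filter_val, Fin.univ_def]
  simp only [Multiset.filter_coe, Multiset.coe_card]
  rw [← List.countP_eq_length_filter, ← List.countP_eq_length_filter]
  congr 1

def word (m n : ℕ) (g : Equiv.Perm (Fin (m * n))) : List ℕ :=
  List.ofFn (fun p : Fin (m * n) => ((g.symm p : ℕ)) / m + 1)

theorem word_perm (m n : ℕ) (hm : 1 ≤ m) (g : Equiv.Perm (Fin (m * n))) :
    (word m n g).Perm (baseWord m n) := by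
  rw [baseWord_eq m n hm, word]
  rw [List.ofFn_eq_map, List.ofFn_eq_map]
  have h1 : (List.finRange (m*n)).map (fun p => ((g.symm p : ℕ)) / m + 1)
      = (((List.finRange (m*n)).map ⇑g.symm).map (fun p : Fin (m*n) => (p : ℕ) / m + 1)) := by
    rw [List.map_map]
    rfl
  rw [h1]
  apply List.Perm.map
  apply List.perm_of_nodup_nodup_toFinset_eq
  · exact (List.nodup_finRange _).map g.symm.injective
  · exact List.nodup_finRange _
  · rw [List.toFinset_finRange]
    apply Finset.eq_univ_of_forall
    intro u
    rw [List.mem_toFinset, List.mem_map]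
    exact ⟨g u, List.mem_finRange _, g.symm_apply_apply u⟩

theorem word_mem (m n : ℕ) (hm : 1 ≤ m) (g : Equiv.Perm (Fin (m * n))) :
    word m n g ∈ multisetPerms m n := by
  rw [multisetPerms, List.mem_toFinset, List.mem_permutations]
  exact word_perm m n hm g

theorem word_surj (m n : ℕ) (hm : 1 ≤ m) (π : List ℕ) (hπ : π ∈ multisetPerms m n) :
    ∃ g : Equiv.Perm (Fin (m * n)), word m n g = π := by
  classical
  rw [multisetPerms, List.mem_toFinset, List.mem_permutations] at hπ
  have hπ' := hπ
  rw [baseWord_eq m n hm] at hπ'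
  have hlen : π.length = m * n := by
    rw [hπ'.length_eq, List.length_ofFn]
  set F : Fin (m * n) → ℕ := fun p => π.get (Fin.cast hlen.symm p) with hF
  have hπF : π = List.ofFn F := by
    rw [← List.ofFn_get π, List.ofFn_congr hlen]
  set τ := Tuple.sort F with hτ
  have hmono : Monotone (F ∘ τ) := Tuple.monotone_sort F
  have hblk : Monotone (fun p : Fin (m*n) => (p : ℕ) / m + 1) := by
    intro p q hpq
    simp only []
    exact Nat.add_le_add_right (Nat.div_le_div_right hpq) 1
  have hperm : (List.ofFn (F ∘ τ)).Perm (List.ofFn (fun p : Fin (m*n) => (p : ℕ) / m + 1)) := by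
    refine (Equiv.Perm.ofFn_comp_perm τ F).trans ?_
    rw [← hπF, ← baseWord_eq m n hm]
    exact hπ
  have heq : F ∘ τ = fun p : Fin (m*n) => (p : ℕ) / m + 1 := by
    apply List.ofFn_injective
    exact List.Perm.eq_of_sortedLE hmono.sortedLE_ofFn hblk.sortedLE_ofFn hperm
  refine ⟨τ, ?_⟩
  rw [word, hπF]
  congr 1
  funext p
  have := congrFun heq (τ.symm p)
  simpa using this.symm

theorem bonferroni {α β : Type*} [DecidableEq α] [DecidableEq β] (s : Finset α)
    (f : α → Finset β) :
    ∑ a ∈ s, (f a).card ≤ (s.biUnion f).card + ∑ p ∈ s.offDiag, ((f p.1) ∩ (f p.2)).card := by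
  classical
  induction s using Finset.induction_on with
  | empty => simp
  | insert _ _ ha ih =>
      rename_i a s
      rw [Finset.sum_insert ha, Finset.biUnion_insert]
      have h1 : (f a ∩ s.biUnion f).card ≤ ∑ b ∈ s, (f a ∩ f b).card := by
        rw [Finset.inter_biUnion]
        exact Finset.card_biUnion_le
      have h2 : (f a ∪ s.biUnion f).card + (f a ∩ s.biUnion f).card
          = (f a).card + (s.biUnion f).card := Finset.card_union_add_card_inter _ _
      have h3 : ∑ p ∈ s.offDiag, ((f p.1) ∩ (f p.2)).card + ∑ b ∈ s, (f a ∩ f b).card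
          ≤ ∑ p ∈ (insert a s).offDiag, ((f p.1) ∩ (f p.2)).card := by
        rw [Finset.offDiag_insert (a := a) (s := s) ha]
        have hd : Disjoint (s.offDiag) ({a} ×ˢ s) := by
          rw [Finset.disjoint_left]
          rintro ⟨p1, p2⟩ hp hq
          rw [Finset.mem_offDiag] at hp
          rw [Finset.mem_product, Finset.mem_singleton] at hq
          exact ha (hq.1 ▸ hp.1)
        have hsub : s.offDiag ∪ ({a} ×ˢ s) ⊆ s.offDiag ∪ {a} ×ˢ s ∪ s ×ˢ {a} :=
          Finset.subset_union_left
        calc ∑ p ∈ s.offDiag, ((f p.1) ∩ (f p.2)).card + ∑ b ∈ s, (f a ∩ f b).card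
            = ∑ p ∈ s.offDiag ∪ ({a} ×ˢ s), ((f p.1) ∩ (f p.2)).card := by
              rw [Finset.sum_union hd]
              congr 1
              rw [Finset.sum_product, Finset.sum_singleton]
          _ ≤ _ := Finset.sum_le_sum_of_subset hsub
      omega

def fiber (m n : ℕ) (π : List ℕ) : Finset (Equiv.Perm (Fin (m * n))) :=
  Finset.univ.filter fun g => word m n g = π

theorem word_trans (m n : ℕ) (g g₀ g₀' : Equiv.Perm (Fin (m * n)))
    (h : word m n g = word m n g₀) :
    word m n (g.trans (g₀.symm.trans g₀')) = word m n g₀' := by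
  rw [word, word] at h
  have hfun := congrFun (List.ofFn_injective h)
  rw [word, word]
  congr 1
  funext p
  have hsymm : (g.trans (g₀.symm.trans g₀')).symm p = g.symm (g₀ (g₀'.symm p)) := rfl
  rw [hsymm, hfun (g₀ (g₀'.symm p)), g₀.symm_apply_apply]

theorem fiber_card (m n : ℕ) (hm : 1 ≤ m) (π π' : List ℕ) (hπ : π ∈ multisetPerms m n)
    (hπ' : π' ∈ multisetPerms m n) : (fiber m n π).card = (fiber m n π').card := by
  classical
  obtain ⟨g₀, hg₀⟩ := word_surj m n hm π hπ
  obtain ⟨g₀', hg₀'⟩ := word_surj m n hm π' hπ'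
  apply Finset.card_nbij' (i := fun g => g.trans (g₀.symm.trans g₀'))
    (j := fun g => g.trans (g₀'.symm.trans g₀))
  · intro g hg
    rw [fiber, Finset.mem_coe, Finset.mem_filter] at hg ⊢
    refine ⟨Finset.mem_univ _, ?_⟩
    rw [word_trans m n g g₀ g₀' (hg.2.trans hg₀.symm), hg₀']
  · intro g hg
    rw [fiber, Finset.mem_coe, Finset.mem_filter] at hg ⊢
    refine ⟨Finset.mem_univ _, ?_⟩
    rw [word_trans m n g g₀' g₀ (hg.2.trans hg₀'.symm), hg₀]
  · intro g _
    ext u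
    simp
  · intro g _
    ext u
    simp

theorem univ_card_eq (m n : ℕ) (hm : 1 ≤ m) :
    (m * n).factorial = (multisetPerms m n).card * (fiber m n (baseWord m n)).card := by
  classical
  have hdisj : ∀ π ∈ multisetPerms m n, ∀ π' ∈ multisetPerms m n, π ≠ π' →
      Disjoint (fiber m n π) (fiber m n π') := by
    intro π _ π' _ hne
    rw [Finset.disjoint_left]
    intro g hg hg'
    rw [fiber, Finset.mem_filter] at hg hg'
    exact hne (hg.2 ▸ hg'.2 ▸ rfl)
  have huniv : (Finset.univ : Finset (Equiv.Perm (Fin (m * n))))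
      = (multisetPerms m n).biUnion (fiber m n) := by
    ext g
    simp only [Finset.mem_univ, true_iff, Finset.mem_biUnion]
    exact ⟨word m n g, word_mem m n hm g, by rw [fiber, Finset.mem_filter]; exact ⟨Finset.mem_univ _, rfl⟩⟩
  have := Finset.card_biUnion hdisj
  rw [← huniv] at this
  rw [Finset.card_univ, Fintype.card_perm, Fintype.card_fin] at this
  rw [this]
  rw [Finset.sum_congr rfl (fun π hπ => fiber_card m n hm π (baseWord m n) hπ
    (by rw [multisetPerms, List.mem_toFinset, List.mem_permutations]))]
  rw [Finset.sum_const, smul_eq_mul]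

theorem good_card_eq (m n : ℕ) (hm : 1 ≤ m) :
    (Finset.univ.filter fun g : Equiv.Perm (Fin (m * n)) =>
        (List.range' 1 n).Sublist (word m n g)).card
      = ((multisetPerms m n).filter fun π => (List.range' 1 n).Sublist π).card
          * (fiber m n (baseWord m n)).card := by
  classical
  have hdisj : ∀ π ∈ (multisetPerms m n).filter (fun π => (List.range' 1 n).Sublist π),
      ∀ π' ∈ (multisetPerms m n).filter (fun π => (List.range' 1 n).Sublist π), π ≠ π' →
      Disjoint (fiber m n π) (fiber m n π') := by
    intro π _ π' _ hne
    rw [Finset.disjoint_left]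
    intro g hg hg'
    rw [fiber, Finset.mem_filter] at hg hg'
    exact hne (hg.2 ▸ hg'.2 ▸ rfl)
  have huniv : (Finset.univ.filter fun g : Equiv.Perm (Fin (m * n)) =>
        (List.range' 1 n).Sublist (word m n g))
      = ((multisetPerms m n).filter fun π => (List.range' 1 n).Sublist π).biUnion (fiber m n) := by
    ext g
    simp only [Finset.mem_filter, Finset.mem_univ, true_and, Finset.mem_biUnion]
    constructor
    · intro hsub
      exact ⟨word m n g, ⟨word_mem m n hm g, hsub⟩,
        by rw [fiber, Finset.mem_filter]; exact ⟨Finset.mem_univ _, rfl⟩⟩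
    · rintro ⟨π, hπ, hg⟩
      rw [fiber, Finset.mem_filter] at hg
      rw [hg.2]
      exact hπ.2
  rw [huniv, Finset.card_biUnion hdisj]
  rw [Finset.sum_congr rfl (fun π hπ => fiber_card m n hm π (baseWord m n)
    (Finset.mem_of_mem_filter _ hπ)
    (by rw [multisetPerms, List.mem_toFinset, List.mem_permutations]))]
  rw [Finset.sum_const, smul_eq_mul]

def symb (m n : ℕ) (hm : 1 ≤ m) (x : Fin n → Fin m) (i : Fin n) : Fin (m * n) :=
  ⟨m * i + x i, by
    calc m * (i : ℕ) + (x i : ℕ) < m * i + m := Nat.add_lt_add_left (x i).2 _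
      _ = m * (i + 1) := by ring
      _ ≤ m * n := Nat.mul_le_mul_left m i.2⟩

theorem symb_div (m n : ℕ) (hm : 1 ≤ m) (x : Fin n → Fin m) (i : Fin n) :
    ((symb m n hm x i : ℕ)) / m = i := by
  rw [symb]
  simp only []
  rw [Nat.mul_add_div hm, Nat.div_eq_of_lt (x i).2, Nat.add_zero]

theorem symb_inj (m n : ℕ) (hm : 1 ≤ m) (x : Fin n → Fin m) :
    Function.Injective (symb m n hm x) := by
  intro i j hij
  have := congrArg (fun u : Fin (m*n) => (u : ℕ) / m) hij
  simp only [symb_div] at this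
  exact Fin.ext this

theorem E_sub_good (m n : ℕ) (hm : 1 ≤ m) (x : Fin n → Fin m) (g : Equiv.Perm (Fin (m * n)))
    (hg : StrictMono fun i => g (symb m n hm x i)) :
    (List.range' 1 n).Sublist (word m n g) := by
  rw [List.sublist_iff_exists_fin_orderEmbedding_get_eq]
  have l1 : (List.range' 1 n).length = n := by simp
  have l2 : (word m n g).length = m * n := by simp [word]
  have hsm : StrictMono (fun i : Fin ((List.range' 1 n).length) =>
      Fin.cast l2.symm (g (symb m n hm x (Fin.cast l1 i)))) := by
    intro a b hab
    have : Fin.cast l1 a < Fin.cast l1 b := by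
      rw [Fin.lt_def] at hab ⊢
      simpa using hab
    have := hg this
    rw [Fin.lt_def] at this ⊢
    simpa using this
  refine ⟨OrderEmbedding.ofStrictMono _ hsm, ?_⟩
  intro i
  rw [List.get_eq_getElem, List.get_eq_getElem]
  rw [List.getElem_range'_1]
  simp only [OrderEmbedding.coe_ofStrictMono, Fin.coe_cast]
  simp only [OrderEmbedding.coe_ofStrictMono, word, List.getElem_ofFn, Fin.coe_cast, Fin.eta,
    Equiv.symm_apply_apply, symb_div]
  omega

theorem E_card (m n : ℕ) (hm : 1 ≤ m) (x : Fin n → Fin m) :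
    (Finset.univ.filter fun g : Equiv.Perm (Fin (m * n)) =>
        StrictMono fun i => g (symb m n hm x i)).card * n.factorial = (m * n).factorial := by
  classical
  have h := count_core (symb m n hm x) (Fin.elim0 : Fin 0 → Fin (m * n))
    (symb_inj m n hm x) (fun a => a.elim0) (fun i j => j.elim0)
  rw [Nat.factorial_zero, mul_one] at h
  rw [← h]
  congr 2
  apply Finset.filter_congr
  intro g _
  simp only [iff_self_and, and_iff_left_iff_imp]
  intro _
  exact fun a => a.elim0

theorem E_pair_card (m n δ : ℕ) (hm : 1 ≤ m) (x y : Fin n → Fin m)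
    (hδ : δ ≤ (Finset.univ.filter fun i => x i ≠ y i).card) :
    ((Finset.univ.filter fun g : Equiv.Perm (Fin (m * n)) =>
          StrictMono fun i => g (symb m n hm x i)) ∩
        (Finset.univ.filter fun g : Equiv.Perm (Fin (m * n)) =>
          StrictMono fun i => g (symb m n hm y i))).card * (n.factorial * δ.factorial)
      ≤ (m * n).factorial := by
  classical
  obtain ⟨S, hSsub, hScard⟩ := Finset.exists_subset_card_eq hδ
  set d := S.orderEmbOfFin hScard with hd
  have hdD : ∀ j, x (d j) ≠ y (d j) := by
    intro j
    have := hSsub (Finset.orderEmbOfFin_mem S hScard j)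
    rw [Finset.mem_filter] at this
    exact this.2
  have htinj : Function.Injective fun j => symb m n hm y (d j) :=
    (symb_inj m n hm y).comp d.injective
  have hst : ∀ i j, symb m n hm x i ≠ symb m n hm y (d j) := by
    intro i j h
    have hij : i = d j := by
      have := congrArg (fun u : Fin (m*n) => (u : ℕ) / m) h
      simp only [symb_div] at this
      exact Fin.ext this
    have hval := congrArg (fun u : Fin (m*n) => (u : ℕ)) h
    rw [symb, symb] at hval
    simp only [] at hval
    subst hij
    exact hdD j (Fin.ext (Nat.add_left_cancel hval))
  have hcore := count_core (symb m n hm x) (fun j => symb m n hm y (d j))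
    (symb_inj m n hm x) htinj hst
  rw [← hcore]
  apply Nat.mul_le_mul_right
  apply Finset.card_le_card
  intro g hg
  rw [Finset.mem_inter, Finset.mem_filter, Finset.mem_filter] at hg
  rw [Finset.mem_filter]
  exact ⟨Finset.mem_univ _, hg.1.2, hg.2.2.comp d.strictMono⟩


/-- If `T ⊆ [m]^n` has pairwise Hamming distance at least `δ`, then the probability that a
uniformly random `π ∈ S_{m,n}` contains `1 2 ⋯ n` as a subsequence is at least
`(|T|/n!)(1 - |T|/δ!)`. -/
theorem stmt_13 (m n δ : ℕ) (hm : 1 ≤ m) (T : Finset (Fin n → Fin m))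
    (hT : ∀ x ∈ T, ∀ y ∈ T, x ≠ y → δ ≤ hammingDist x y) :
    ((T.card : ℝ) / (n.factorial : ℝ)) * (1 - (T.card : ℝ) / (δ.factorial : ℝ))
      ≤ ((multisetPerms m n).filter fun π => (List.range' 1 n).Sublist π).card
          / (multisetPerms m n).card := by
  classical
  set E : (Fin n → Fin m) → Finset (Equiv.Perm (Fin (m * n))) := fun x =>
    Finset.univ.filter fun g => StrictMono fun i => g (symb m n hm x i) with hE
  set Good : Finset (Equiv.Perm (Fin (m * n))) :=
    Finset.univ.filter fun g => (List.range' 1 n).Sublist (word m n g) with hGood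
  have hbiU : T.biUnion E ⊆ Good := by
    intro g hg
    rw [Finset.mem_biUnion] at hg
    obtain ⟨x, -, hx⟩ := hg
    rw [hE, Finset.mem_filter] at hx
    rw [hGood, Finset.mem_filter]
    exact ⟨Finset.mem_univ _, E_sub_good m n hm x g hx.2⟩
  have h3 : ∑ x ∈ T, (E x).card ≤ Good.card + ∑ p ∈ T.offDiag, ((E p.1) ∩ (E p.2)).card :=
    le_trans (bonferroni T E) (Nat.add_le_add_right (Finset.card_le_card hbiU) _)
  -- real number facts
  have hnfac : (0:ℝ) < (n.factorial : ℝ) := by exact_mod_cast n.factorial_pos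
  have hdfac : (0:ℝ) < (δ.factorial : ℝ) := by exact_mod_cast δ.factorial_pos
  have hNpos : (0:ℝ) < ((m * n).factorial : ℝ) := by exact_mod_cast (m*n).factorial_pos
  have h1R : ∀ x : Fin n → Fin m, ((E x).card : ℝ) = ((m*n).factorial : ℝ) / (n.factorial : ℝ) := by
    intro x
    have := E_card m n hm x
    rw [eq_div_iff (ne_of_gt hnfac)]
    exact_mod_cast this
  have h2R : ∀ p ∈ T.offDiag, (((E p.1) ∩ (E p.2)).card : ℝ)
      ≤ ((m*n).factorial : ℝ) / ((n.factorial : ℝ) * (δ.factorial : ℝ)) := by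
    rintro ⟨x, y⟩ hp
    rw [Finset.mem_offDiag] at hp
    have hham := hT x hp.1 y hp.2.1 hp.2.2
    have hδ' : δ ≤ (Finset.univ.filter fun i => x i ≠ y i).card := by
      rw [hammingDist] at hham
      exact_mod_cast hham
    have := E_pair_card m n δ hm x y hδ'
    rw [le_div_iff₀ (by positivity)]
    exact_mod_cast this
  -- cast h3 to ℝ
  have h3R : (T.card : ℝ) * (((m*n).factorial : ℝ) / (n.factorial : ℝ))
      ≤ (Good.card : ℝ) + (T.card : ℝ) * (T.card : ℝ)
          * (((m*n).factorial : ℝ) / ((n.factorial : ℝ) * (δ.factorial : ℝ))) := by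
    have hsum1 : (T.card : ℝ) * (((m*n).factorial : ℝ) / (n.factorial : ℝ))
        = ∑ x ∈ T, ((E x).card : ℝ) := by
      rw [Finset.sum_congr rfl (fun x _ => h1R x), Finset.sum_const, nsmul_eq_mul]
    have hsum2 : ∑ p ∈ T.offDiag, (((E p.1) ∩ (E p.2)).card : ℝ)
        ≤ (T.card : ℝ) * (T.card : ℝ)
          * (((m*n).factorial : ℝ) / ((n.factorial : ℝ) * (δ.factorial : ℝ))) := by
      calc ∑ p ∈ T.offDiag, (((E p.1) ∩ (E p.2)).card : ℝ)
          ≤ ∑ _p ∈ T.offDiag, ((m*n).factorial : ℝ) / ((n.factorial : ℝ) * (δ.factorial : ℝ)) :=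
            Finset.sum_le_sum h2R
        _ = (T.offDiag.card : ℝ) * (((m*n).factorial : ℝ) / ((n.factorial : ℝ) * (δ.factorial : ℝ))) := by
            rw [Finset.sum_const, nsmul_eq_mul]
        _ ≤ (T.card : ℝ) * (T.card : ℝ)
            * (((m*n).factorial : ℝ) / ((n.factorial : ℝ) * (δ.factorial : ℝ))) := by
            apply mul_le_mul_of_nonneg_right _ (by positivity)
            rw [Finset.offDiag_card]
            have : T.card * T.card - T.card ≤ T.card * T.card := Nat.sub_le _ _
            calc ((T.card * T.card - T.card : ℕ) : ℝ) ≤ ((T.card * T.card : ℕ) : ℝ) := by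
                  exact_mod_cast this
              _ = (T.card : ℝ) * (T.card : ℝ) := by push_cast; ring
    have hcast : (∑ x ∈ T, ((E x).card :ℝ)) ≤ (Good.card : ℝ) + ∑ p ∈ T.offDiag, (((E p.1) ∩ (E p.2)).card : ℝ) := by
      exact_mod_cast h3
    calc (T.card : ℝ) * (((m*n).factorial : ℝ) / (n.factorial : ℝ))
        = ∑ x ∈ T, ((E x).card : ℝ) := hsum1
      _ ≤ (Good.card : ℝ) + ∑ p ∈ T.offDiag, (((E p.1) ∩ (E p.2)).card : ℝ) := hcast
      _ ≤ _ := by exact add_le_add_right hsum2 _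
  -- key lower bound on Good.card
  have hkey : ((T.card : ℝ) / (n.factorial : ℝ)) * (1 - (T.card : ℝ) / (δ.factorial : ℝ))
      * ((m*n).factorial : ℝ) ≤ (Good.card : ℝ) := by
    have expand : ((T.card : ℝ) / (n.factorial : ℝ)) * (1 - (T.card : ℝ) / (δ.factorial : ℝ))
        * ((m*n).factorial : ℝ)
        = (T.card : ℝ) * (((m*n).factorial : ℝ) / (n.factorial : ℝ))
          - (T.card : ℝ) * (T.card : ℝ)
            * (((m*n).factorial : ℝ) / ((n.factorial : ℝ) * (δ.factorial : ℝ))) := by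
      field_simp
    rw [expand]
    linarith [h3R]
  -- transfer to the list side
  have hGoodEq := good_card_eq m n hm
  have hUnivEq := univ_card_eq m n hm
  set c' := (fiber m n (baseWord m n)).card with hc'
  set A := ((multisetPerms m n).filter fun π => (List.range' 1 n).Sublist π).card with hA
  have hGoodA : Good.card = A * c' := hGoodEq
  have hcpos : 0 < c' := by
    by_contra hc
    have : c' = 0 := by omega
    rw [this, mul_zero] at hUnivEq
    exact (Nat.factorial_pos (m*n)).ne' hUnivEq
  have hmppos : 0 < (multisetPerms m n).card := by
    by_contra hc
    have : (multisetPerms m n).card = 0 := by omega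
    rw [this, zero_mul] at hUnivEq
    exact (Nat.factorial_pos (m*n)).ne' hUnivEq
  have final : ((T.card : ℝ) / (n.factorial : ℝ)) * (1 - (T.card : ℝ) / (δ.factorial : ℝ))
      ≤ (Good.card : ℝ) / ((m*n).factorial : ℝ) := by
    rw [le_div_iff₀ hNpos]
    exact hkey
  calc ((T.card : ℝ) / (n.factorial : ℝ)) * (1 - (T.card : ℝ) / (δ.factorial : ℝ))
      ≤ (Good.card : ℝ) / ((m*n).factorial : ℝ) := final
    _ = ((A : ℝ) * (c' : ℝ)) / (((multisetPerms m n).card : ℝ) * (c' : ℝ)) := by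
        rw [hGoodA, hUnivEq]; push_cast; ring_nf
    _ = (A : ℝ) / ((multisetPerms m n).card : ℝ) := by
        rw [mul_div_mul_right _ _ (by exact_mod_cast hcpos.ne')]
end
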